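/- Let u₀ ∈ H^{2ν - 1/2}(ℝ) for ν ∈ ℝ with 2ν - 1/2 ≥ 0, and define II(t) = ∫₁^∞ e^{-itτ} [𝓕u₀(√τ) + 𝓕u₀(-√τ)] dτ/(2π√τ). Then ‖II‖_{H^ν(ℝ_t)} ≤ C ‖u₀‖_{H^{2ν - 1/2}(ℝ_x)}. -/

import Mathlib

open MeasureTheory Real Set
noncomputable section

/-- Fourier transform with the paper's normalization `𝓕f(ξ) = ∫ e^{-iξx} f(x) dx`. -/
def FT (f : ℝ → ℂ) (ξ : ℝ) : ℂ := ∫ x : ℝ, Complex.exp (-(Complex.I * ξ * x)) * f x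

/-- Square of the `H^s(ℝ)` Sobolev norm. -/
def sobNormSq (s : ℝ) (f : ℝ → ℂ) : ℝ := ∫ τ : ℝ, (1 + τ^2) ^ s * ‖FT f τ‖^2

/-- The `H^s(ℝ)` Sobolev norm. -/
def sobNorm (s : ℝ) (f : ℝ → ℂ) : ℝ := Real.sqrt (sobNormSq s f)

/-- Membership in `H^s(ℝ)`. -/
def MemSob (s : ℝ) (f : ℝ → ℂ) : Prop :=
  MeasureTheory.Integrable (fun τ : ℝ => (1 + τ^2) ^ s * ‖FT f τ‖^2)

/-- Signed indicator `1_{[0,t]}` (for `t < 0`, `-1_{[t,0]}`), so that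
`𝓕(ind t)(τ) = (e^{-iτt} - 1)/(-iτ)`. -/
def ind (t : ℝ) : ℝ → ℂ :=
  fun s => if 0 ≤ t then Set.indicator (Set.Ioc 0 t) (fun _ => (1:ℂ)) s
           else - Set.indicator (Set.Ioc t 0) (fun _ => (1:ℂ)) s


/-- The high-frequency part of the free Schrödinger evolution at x = 0. -/
def IIpart (u₀ : ℝ → ℂ) (t : ℝ) : ℂ :=
  ∫ τ in Set.Ioi (1:ℝ),
    Complex.exp (-(Complex.I * t * τ)) * (FT u₀ (Real.sqrt τ) + FT u₀ (-Real.sqrt τ))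
      / (2 * Real.pi * (Real.sqrt τ : ℂ))

open FourierTransform

lemma norm_exp_neg_I_mul (a b : ℝ) : ‖Complex.exp (-(Complex.I * a * b))‖ = 1 := by
  rw [Complex.norm_exp]
  simp

lemma norm_exp_I_mul (a b : ℝ) : ‖Complex.exp (Complex.I * a * b)‖ = 1 := by
  rw [Complex.norm_exp]
  simp

lemma integrable_exp_mul_iff (a : ℝ) (f : ℝ → ℂ) :
    Integrable (fun x : ℝ => Complex.exp (-(Complex.I * a * x)) * f x) ↔ Integrable f := by
  constructor
  · intro h
    have hm : AEStronglyMeasurable (fun x : ℝ => Complex.exp (Complex.I * a * x)) volume :=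
      Continuous.aestronglyMeasurable (by fun_prop)
    have h2 := h.bdd_mul hm (Filter.Eventually.of_forall fun x => le_of_eq (norm_exp_I_mul a x))
    refine h2.congr (Filter.Eventually.of_forall fun x => ?_)
    show Complex.exp (Complex.I * a * x) * (Complex.exp (-(Complex.I * a * x)) * f x) = f x
    rw [← mul_assoc, ← Complex.exp_add]
    simp
  · intro h
    have hm : AEStronglyMeasurable (fun x : ℝ => Complex.exp (-(Complex.I * a * x))) volume :=
      Continuous.aestronglyMeasurable (by fun_prop)
    exact h.bdd_mul hm (Filter.Eventually.of_forall fun x => le_of_eq (norm_exp_neg_I_mul a x))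

lemma FT_eq (f : ℝ → ℂ) (ξ : ℝ) : FT f ξ = 𝓕 f (ξ / (2 * π)) := by
  rw [Real.fourier_real_eq_integral_exp_smul, FT]
  congr 1
  funext x
  rw [smul_eq_mul]
  congr 1
  have h : (-2 * π * x * (ξ / (2 * π))) = -(ξ * x) := by
    field_simp
  rw [h]
  push_cast
  ring

lemma FT_continuous {f : ℝ → ℂ} (hf : Integrable f) : Continuous (FT f) := by
  have h1 : Continuous (𝓕 f) :=
    VectorFourier.fourierIntegral_continuous Real.continuous_fourierChar continuous_inner hf
  have h2 : FT f = fun ξ => 𝓕 f (ξ / (2 * π)) := funext (FT_eq f)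
  rw [h2]
  exact h1.comp (by fun_prop)

lemma sobNorm_zero_of_FT_zero {f : ℝ → ℂ} (ν : ℝ) (h : ∀ τ, FT f τ = 0) : sobNorm ν f = 0 := by
  have h0 : sobNormSq ν f = 0 := by
    simp [sobNormSq, h]
  simp [sobNorm, h0]

/-- the auxiliary high-frequency density -/
def ghf (u₀ : ℝ → ℂ) : ℝ → ℂ :=
  (Set.Ioi (1:ℝ)).indicator (fun τ =>
    (FT u₀ (Real.sqrt τ) + FT u₀ (-Real.sqrt τ)) / (2 * Real.pi * (Real.sqrt τ : ℂ)))

lemma IIpart_eq_FT_ghf (u₀ : ℝ → ℂ) : IIpart u₀ = FT (ghf u₀) := by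
  funext t
  rw [IIpart, FT, ← integral_indicator measurableSet_Ioi]
  congr 1
  funext τ
  by_cases hτ : τ ∈ Set.Ioi (1:ℝ)
  · rw [ghf, Set.indicator_of_mem hτ, Set.indicator_of_mem hτ]
    exact mul_div_assoc _ _ _
  · rw [ghf, Set.indicator_of_notMem hτ, Set.indicator_of_notMem hτ, mul_zero]

lemma integrable_comp_neg' {q : ℝ → ℝ} (h : Integrable q) : Integrable (fun x => q (-x)) := by
  have A : MeasurableEmbedding fun x : ℝ => -x :=
    (Homeomorph.neg ℝ).isClosedEmbedding.measurableEmbedding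
  have B : MeasurePreserving (fun x : ℝ => -x) volume volume :=
    Measure.measurePreserving_neg _
  exact (B.integrable_comp_emb A).2 h

lemma ae_ne_neg_one : ∀ᵐ τ : ℝ, τ ≠ -1 := by
  refine MeasureTheory.mem_ae_iff.2 ?_
  have : {τ : ℝ | τ ≠ -1}ᶜ = {(-1 : ℝ)} := by
    ext x; simp
  rw [this]
  exact measure_singleton _

set_option maxHeartbeats 1600000 in
theorem high_frequency_part_sobolev_bound (ν : ℝ) (hν : 0 ≤ 2*ν - 1/2) :
    ∃ C : ℝ, 0 < C ∧ ∀ u₀ : ℝ → ℂ, MemSob (2*ν - 1/2) u₀ →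
      sobNorm ν (IIpart u₀) ≤ C * sobNorm (2*ν - 1/2) u₀ := by
  refine ⟨4, by norm_num, fun u₀ hu => ?_⟩
  have hν0 : 0 ≤ ν := by linarith
  have hdone : (∀ τ, FT (IIpart u₀) τ = 0) → sobNorm ν (IIpart u₀) ≤ 4 * sobNorm (2*ν - 1/2) u₀ := by
    intro h
    rw [sobNorm_zero_of_FT_zero ν h]
    have := Real.sqrt_nonneg (sobNormSq (2*ν - 1/2) u₀)
    rw [sobNorm]
    linarith
  by_cases hu0 : Integrable u₀
  swap
  · have hF0 : ∀ ξ, FT u₀ ξ = 0 := fun ξ =>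
      integral_undef (fun hh => hu0 ((integrable_exp_mul_iff ξ u₀).1 hh))
    have hII0 : ∀ t, IIpart u₀ t = 0 := by
      intro t
      rw [IIpart]
      simp [hF0]
    exact hdone (fun τ => by rw [FT]; simp [hII0])
  by_cases hg0 : Integrable (ghf u₀)
  swap
  · have hII0 : ∀ t, IIpart u₀ t = 0 := by
      intro t
      rw [IIpart_eq_FT_ghf, FT]
      exact integral_undef (fun hh => hg0 ((integrable_exp_mul_iff t _).1 hh))
    exact hdone (fun τ => by rw [FT]; simp [hII0])
  by_cases hII : Integrable (IIpart u₀)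
  swap
  · exact hdone (fun τ => integral_undef (fun hh => hII ((integrable_exp_mul_iff τ _).1 hh)))
  -- main case
  have hpos : (0:ℝ) < 2*π := by positivity
  have hFcont : Continuous (FT u₀) := FT_continuous hu0
  have hfg : Integrable (𝓕 (ghf u₀)) := by
    have h1 : Integrable (fun t : ℝ => 𝓕 (ghf u₀) (t * (2*π)⁻¹)) := by
      refine hII.congr (Filter.Eventually.of_forall fun t => ?_)
      rw [IIpart_eq_FT_ghf, FT_eq, div_eq_mul_inv]
    exact (integrable_comp_mul_right_iff (𝓕 (ghf u₀)) (inv_ne_zero hpos.ne')).1 h1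
  have hgc : ∀ v : ℝ, v ≠ 1 → ContinuousAt (ghf u₀) v := by
    intro v hv
    rcases lt_or_gt_of_ne hv with h | h
    · have hev : ghf u₀ =ᶠ[nhds v] (fun _ => (0:ℂ)) := by
        filter_upwards [Iio_mem_nhds h] with x hx
        exact Set.indicator_of_notMem (by simp only [Set.mem_Ioi, not_lt]; exact le_of_lt hx) _
      exact ContinuousAt.congr continuousAt_const hev.symm
    · have hev : ghf u₀ =ᶠ[nhds v] (fun τ : ℝ =>
          (FT u₀ (Real.sqrt τ) + FT u₀ (-Real.sqrt τ)) / (2 * Real.pi * (Real.sqrt τ : ℂ))) := by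
        filter_upwards [Ioi_mem_nhds h] with x hx
        exact Set.indicator_of_mem hx _
      have h0 : (0:ℝ) < Real.sqrt v := Real.sqrt_pos.2 (by linarith)
      have hc : ContinuousAt (fun τ : ℝ =>
          (FT u₀ (Real.sqrt τ) + FT u₀ (-Real.sqrt τ)) / (2 * Real.pi * (Real.sqrt τ : ℂ))) v := by
        apply ContinuousAt.div
        · exact ((hFcont.comp Real.continuous_sqrt).continuousAt).add
            ((hFcont.comp Real.continuous_sqrt.neg).continuousAt)
        · exact (continuous_const.mul
            (Complex.continuous_ofReal.comp Real.continuous_sqrt)).continuousAt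
        · have h1 : ((Real.sqrt v : ℝ) : ℂ) ≠ 0 := by exact_mod_cast h0.ne'
          have h2 : ((π : ℝ) : ℂ) ≠ 0 := by exact_mod_cast Real.pi_ne_zero
          exact mul_ne_zero (mul_ne_zero two_ne_zero h2) h1
      exact ContinuousAt.congr hc hev.symm
  have hinv : ∀ τ : ℝ, τ ≠ -1 →
      FT (IIpart u₀) τ = ((2*π : ℝ) : ℂ) * ghf u₀ (-τ) := by
    intro τ hτ
    set f : ℝ → ℂ := fun t => Complex.exp (-(Complex.I * τ * t)) * 𝓕 (ghf u₀) (t / (2*π)) with hf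
    have e1 : FT (IIpart u₀) τ = ∫ t : ℝ, f t := by
      rw [FT]
      congr 1
      funext t
      rw [hf, IIpart_eq_FT_ghf, FT_eq]
    have e2 := MeasureTheory.Measure.integral_comp_smul (volume : Measure ℝ) f (2*π)
    rw [Module.finrank_self, pow_one, abs_of_pos (inv_pos.2 hpos)] at e2
    have e3 : FT (IIpart u₀) τ = (2*π : ℝ) • ∫ x : ℝ, f ((2*π) • x) := by
      rw [e1, e2, smul_smul, mul_inv_cancel₀ hpos.ne', one_smul]
    have e4 : (fun x : ℝ => f ((2*π) • x)) =
        (fun x : ℝ => Complex.exp (↑(-2 * π * x * τ) * Complex.I) • 𝓕 (ghf u₀) x) := by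
      funext x
      show Complex.exp (-(Complex.I * τ * (((2*π) • x : ℝ) : ℂ))) *
          𝓕 (ghf u₀) (((2*π) • x : ℝ) / (2*π)) = _
      rw [smul_eq_mul (a := (2*π : ℝ)), smul_eq_mul]
      congr 2
      · push_cast
        ring
      · rw [mul_comm (2*π) x, mul_div_assoc, div_self hpos.ne', mul_one]
    have e5 : FT (IIpart u₀) τ = (2*π : ℝ) • 𝓕 (𝓕 (ghf u₀)) τ := by
      rw [e3, e4, ← Real.fourier_real_eq_integral_exp_smul]
    have e6 : 𝓕 (𝓕 (ghf u₀)) τ = ghf u₀ (-τ) := by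
      have e7 := Real.fourierInv_eq_fourier_neg (𝓕 (ghf u₀)) (-τ)
      rw [neg_neg] at e7
      rw [← e7]
      exact hg0.fourierInv_fourier_eq hfg (hgc (-τ) (fun hcontr => hτ (by linarith)))
    rw [e5, e6, Complex.real_smul]
  -- now the quantitative part
  have hA0 : ∀ ξ : ℝ, 0 ≤ (1+ξ^2)^(2*ν - 1/2) * ‖FT u₀ ξ‖^2 := fun ξ => by positivity
  have huA : Integrable (fun ξ : ℝ => (1+ξ^2)^(2*ν - 1/2) * ‖FT u₀ ξ‖^2) := hu
  have key : sobNormSq ν (IIpart u₀) = ∫ τ in Set.Ioi (1:ℝ),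
      (1+τ^2)^ν * (‖FT u₀ (Real.sqrt τ) + FT u₀ (-Real.sqrt τ)‖^2 / τ) := by
    have c1 : sobNormSq ν (IIpart u₀) =
        ∫ τ : ℝ, (1+(-τ)^2)^ν * ((2*π)^2 * ‖ghf u₀ (-τ)‖^2) := by
      rw [sobNormSq]
      refine integral_congr_ae ?_
      filter_upwards [ae_ne_neg_one] with τ hτ
      rw [hinv τ hτ, neg_sq]
      congr 1
      rw [norm_mul, mul_pow, Complex.norm_real]
      congr 2
      rw [Real.norm_eq_abs, abs_of_pos hpos]
    have c2 : (∫ τ : ℝ, (1+(-τ)^2)^ν * ((2*π)^2 * ‖ghf u₀ (-τ)‖^2)) =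
        ∫ τ : ℝ, (1+τ^2)^ν * ((2*π)^2 * ‖ghf u₀ τ‖^2) :=
      integral_neg_eq_self (fun τ : ℝ => (1+τ^2)^ν * ((2*π)^2 * ‖ghf u₀ τ‖^2)) volume
    have c3 : (fun τ : ℝ => (1+τ^2)^ν * ((2*π)^2 * ‖ghf u₀ τ‖^2)) =
        (Set.Ioi (1:ℝ)).indicator (fun τ =>
          (1+τ^2)^ν * (‖FT u₀ (Real.sqrt τ) + FT u₀ (-Real.sqrt τ)‖^2 / τ)) := by
      funext τ
      by_cases hτ : τ ∈ Set.Ioi (1:ℝ)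
      · rw [Set.indicator_of_mem hτ, ghf, Set.indicator_of_mem hτ]
        have hτ0 : (0:ℝ) < τ := lt_trans one_pos hτ
        have hsq : (0:ℝ) < Real.sqrt τ := Real.sqrt_pos.2 hτ0
        congr 1
        rw [norm_div]
        have hd : ‖(2 * (π : ℂ) * ((Real.sqrt τ : ℝ) : ℂ))‖ = 2*π*Real.sqrt τ := by
          have hcast : (2 * (π : ℂ) * ((Real.sqrt τ : ℝ) : ℂ)) = (((2*π*Real.sqrt τ : ℝ)) : ℂ) := by
            push_cast
            ring
          rw [hcast, Complex.norm_real, Real.norm_eq_abs, abs_of_pos (by positivity)]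
        rw [hd, div_pow]
        have hss : Real.sqrt τ ^ 2 = τ := Real.sq_sqrt hτ0.le
        rw [mul_pow (2*π) (Real.sqrt τ), hss, ← mul_div_assoc,
          mul_div_mul_left _ _ (by positivity : ((2*π)^2 : ℝ) ≠ 0)]
      · rw [Set.indicator_of_notMem hτ, ghf, Set.indicator_of_notMem hτ]
        simp
    rw [c1, c2, c3, integral_indicator measurableSet_Ioi]
  have hinj : Set.InjOn (fun ξ : ℝ => ξ^2) (Set.Ioi 1) := by
    intro a ha b hb hab
    simp only [Set.mem_Ioi] at ha hb
    simp only at hab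
    have h1 : (a - b) * (a + b) = 0 := by nlinarith
    rcases mul_eq_zero.1 h1 with h | h
    · linarith
    · linarith
  have himg : (fun ξ : ℝ => ξ^2) '' (Set.Ioi 1) = Set.Ioi 1 := by
    ext τ
    constructor
    · rintro ⟨ξ, hξ, rfl⟩
      simp only [Set.mem_Ioi] at *
      nlinarith
    · intro hτ
      simp only [Set.mem_Ioi] at hτ
      refine ⟨Real.sqrt τ, ?_, Real.sq_sqrt (by linarith)⟩
      simp only [Set.mem_Ioi]
      calc (1:ℝ) = Real.sqrt 1 := Real.sqrt_one.symm
        _ < Real.sqrt τ := Real.sqrt_lt_sqrt (by norm_num) hτ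
  have hcov := integral_image_eq_integral_abs_deriv_smul (f := fun ξ : ℝ => ξ^2)
    (f' := fun ξ : ℝ => 2*ξ) measurableSet_Ioi
    (fun ξ _ => by simpa using (hasDerivAt_pow 2 ξ).hasDerivWithinAt) hinj
    (fun τ => (1+τ^2)^ν * (‖FT u₀ (Real.sqrt τ) + FT u₀ (-Real.sqrt τ)‖^2 / τ))
  rw [himg] at hcov
  have hmono : (∫ ξ in Set.Ioi (1:ℝ), |2*ξ| •
        ((1+(ξ^2)^2)^ν * (‖FT u₀ (Real.sqrt (ξ^2)) + FT u₀ (-Real.sqrt (ξ^2))‖^2 / ξ^2)))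
      ≤ ∫ ξ in Set.Ioi (1:ℝ), 8 * ((1+ξ^2)^(2*ν - 1/2) * ‖FT u₀ ξ‖^2 +
          (1+(-ξ)^2)^(2*ν - 1/2) * ‖FT u₀ (-ξ)‖^2) := by
    refine integral_mono_of_nonneg ?_ ?_ ?_
    · refine Filter.Eventually.of_forall fun ξ => ?_
      simp only [Pi.zero_apply, smul_eq_mul]
      positivity
    · exact ((huA.add (integrable_comp_neg' huA)).const_mul 8).integrableOn
    · refine (ae_restrict_mem measurableSet_Ioi).mono fun ξ hξ => ?_
      dsimp only
      simp only [Set.mem_Ioi] at hξ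
      have hξ0 : (0:ℝ) < ξ := by linarith
      rw [Real.sqrt_sq hξ0.le, smul_eq_mul, abs_of_pos (by linarith : (0:ℝ) < 2*ξ), neg_sq]
      have hwpos : (0:ℝ) < 1+ξ^2 := by positivity
      have e1 : (1+(ξ^2)^2)^ν ≤ ((1+ξ^2)^2 : ℝ)^ν :=
        Real.rpow_le_rpow (by positivity) (by nlinarith) hν0
      have e1' : ((1+ξ^2)^2 : ℝ)^ν = (1+ξ^2)^(2*ν) := by
        rw [← Real.rpow_natCast (1+ξ^2) 2, ← Real.rpow_mul hwpos.le]
        norm_num [mul_comm]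
      have e2 : 2*Real.sqrt (1+ξ^2) ≤ 3*ξ := by
        have h3 : Real.sqrt (1+ξ^2) ≤ Real.sqrt ((3/2*ξ)^2) := Real.sqrt_le_sqrt (by nlinarith)
        rw [Real.sqrt_sq (by positivity)] at h3
        linarith
      have hsqpos : (0:ℝ) < Real.sqrt (1+ξ^2) := Real.sqrt_pos.2 hwpos
      have e3 : (2:ℝ)/ξ ≤ 3 / Real.sqrt (1+ξ^2) := by
        rw [div_le_div_iff₀ hξ0 hsqpos]
        linarith
      have e5 : (2/ξ) * (1+(ξ^2)^2)^ν ≤ 3 * (1+ξ^2)^(2*ν - 1/2) := by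
        calc (2/ξ) * (1+(ξ^2)^2)^ν
            ≤ (3 / Real.sqrt (1+ξ^2)) * (1+ξ^2)^(2*ν) := by
              apply mul_le_mul e3 (e1.trans_eq e1') (Real.rpow_nonneg (by positivity) _)
                (by positivity)
          _ = 3 * (1+ξ^2)^(2*ν - 1/2) := by
              rw [Real.rpow_sub hwpos, ← Real.sqrt_eq_rpow]
              ring
      have e4 : ‖FT u₀ ξ + FT u₀ (-ξ)‖^2 ≤ 2*(‖FT u₀ ξ‖^2 + ‖FT u₀ (-ξ)‖^2) := by
        have h4 := norm_add_le (FT u₀ ξ) (FT u₀ (-ξ))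
        have h5 := mul_self_le_mul_self (norm_nonneg (FT u₀ ξ + FT u₀ (-ξ))) h4
        nlinarith [h5, sq_nonneg (‖FT u₀ ξ‖ - ‖FT u₀ (-ξ)‖)]
      have heq : 2*ξ * ((1+(ξ^2)^2)^ν * (‖FT u₀ ξ + FT u₀ (-ξ)‖^2 / ξ^2)) =
          ((2/ξ) * (1+(ξ^2)^2)^ν) * ‖FT u₀ ξ + FT u₀ (-ξ)‖^2 := by
        field_simp
      rw [heq]
      have e6 : ((2/ξ) * (1+(ξ^2)^2)^ν) * ‖FT u₀ ξ + FT u₀ (-ξ)‖^2 ≤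
          (3 * (1+ξ^2)^(2*ν - 1/2)) * (2*(‖FT u₀ ξ‖^2 + ‖FT u₀ (-ξ)‖^2)) :=
        mul_le_mul e5 e4 (sq_nonneg _) (by positivity)
      have e7 : 0 ≤ (1+ξ^2)^(2*ν - 1/2) := Real.rpow_nonneg hwpos.le _
      nlinarith [mul_nonneg e7 (sq_nonneg (‖FT u₀ ξ‖)), mul_nonneg e7 (sq_nonneg (‖FT u₀ (-ξ)‖))]
  have hsplit : (∫ ξ in Set.Ioi (1:ℝ), 8 * ((1+ξ^2)^(2*ν - 1/2) * ‖FT u₀ ξ‖^2 +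
        (1+(-ξ)^2)^(2*ν - 1/2) * ‖FT u₀ (-ξ)‖^2)) =
      8 * ((∫ ξ in Set.Ioi (1:ℝ), (1+ξ^2)^(2*ν - 1/2) * ‖FT u₀ ξ‖^2) +
        ∫ ξ in Set.Ioi (1:ℝ), (1+(-ξ)^2)^(2*ν - 1/2) * ‖FT u₀ (-ξ)‖^2) := by
    rw [integral_const_mul]
    congr 1
    exact integral_add huA.integrableOn (integrable_comp_neg' huA).integrableOn
  have hb1 : (∫ ξ in Set.Ioi (1:ℝ), (1+ξ^2)^(2*ν - 1/2) * ‖FT u₀ ξ‖^2) ≤ sobNormSq (2*ν - 1/2) u₀ :=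
    setIntegral_le_integral huA (Filter.Eventually.of_forall hA0)
  have hb2 : (∫ ξ in Set.Ioi (1:ℝ), (1+(-ξ)^2)^(2*ν - 1/2) * ‖FT u₀ (-ξ)‖^2) ≤
      sobNormSq (2*ν - 1/2) u₀ := by
    have h1 := setIntegral_le_integral (s := Set.Ioi (1:ℝ)) (integrable_comp_neg' huA)
      (Filter.Eventually.of_forall fun ξ => hA0 (-ξ))
    have h2 : (∫ ξ : ℝ, (1+(-ξ)^2)^(2*ν - 1/2) * ‖FT u₀ (-ξ)‖^2) = sobNormSq (2*ν - 1/2) u₀ :=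
      integral_neg_eq_self (fun ξ : ℝ => (1+ξ^2)^(2*ν - 1/2) * ‖FT u₀ ξ‖^2) volume
    calc (∫ ξ in Set.Ioi (1:ℝ), (1+(-ξ)^2)^(2*ν - 1/2) * ‖FT u₀ (-ξ)‖^2)
        ≤ ∫ ξ : ℝ, (1+(-ξ)^2)^(2*ν - 1/2) * ‖FT u₀ (-ξ)‖^2 := h1
      _ = sobNormSq (2*ν - 1/2) u₀ := h2
  have hfinal : sobNormSq ν (IIpart u₀) ≤ 16 * sobNormSq (2*ν - 1/2) u₀ := by
    rw [key, hcov]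
    calc (∫ ξ in Set.Ioi (1:ℝ), |2*ξ| •
          ((1+(ξ^2)^2)^ν * (‖FT u₀ (Real.sqrt (ξ^2)) + FT u₀ (-Real.sqrt (ξ^2))‖^2 / ξ^2)))
        ≤ ∫ ξ in Set.Ioi (1:ℝ), 8 * ((1+ξ^2)^(2*ν - 1/2) * ‖FT u₀ ξ‖^2 +
            (1+(-ξ)^2)^(2*ν - 1/2) * ‖FT u₀ (-ξ)‖^2) := hmono
      _ = 8 * ((∫ ξ in Set.Ioi (1:ℝ), (1+ξ^2)^(2*ν - 1/2) * ‖FT u₀ ξ‖^2) +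
            ∫ ξ in Set.Ioi (1:ℝ), (1+(-ξ)^2)^(2*ν - 1/2) * ‖FT u₀ (-ξ)‖^2) := hsplit
      _ ≤ 16 * sobNormSq (2*ν - 1/2) u₀ := by linarith
  rw [sobNorm, sobNorm]
  calc Real.sqrt (sobNormSq ν (IIpart u₀)) ≤ Real.sqrt (16 * sobNormSq (2*ν - 1/2) u₀) :=
        Real.sqrt_le_sqrt hfinal
    _ = 4 * Real.sqrt (sobNormSq (2*ν - 1/2) u₀) := by
        rw [show (16 : ℝ) * sobNormSq (2*ν - 1/2) u₀ = 4^2 * sobNormSq (2*ν - 1/2) u₀ by norm_num,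
          Real.sqrt_mul (by positivity) _, Real.sqrt_sq (by norm_num : (0:ℝ) ≤ 4)]
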